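/- arXiv:2405.00357 — 4 statements merged into one kernel-verified Lean document; each statement's English description precedes it below -/
import Mathlib

section
/- Fix α ∈ (0,1/2). Let p ∈ [0,1], x > 0, and let X ~ B(p,x) be a scaled Bernoulli random variable. Then ES_α(X) = x · min{1, p/α}, and σ²_{ES_α(X)} = x²(p − p²)/α² if p ≤ α, while σ²_{ES_α(X)} = 0 if p > α. -/
open MeasureTheory ProbabilityTheory Set Filter Topology
open scoped ENNReal NNReal

noncomputable section

/-- The cumulative distribution function of a distribution `μ` on `ℝ`. -/
def distCdf (μ : Measure ℝ) (t : ℝ) : ℝ := (μ (Set.Iic t)).toReal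

/-- The value at risk (generalized inverse of the cdf) at level `u`. -/
def VaR (μ : Measure ℝ) (u : ℝ) : ℝ := sInf {t : ℝ | u ≤ distCdf μ t}

/-- The expected shortfall at level `α`. -/
def ES (α : ℝ) (μ : Measure ℝ) : ℝ := (1 / α) * ∫ u in Set.Ioo (1 - α) 1, VaR μ u

/-- The variance associated to the estimation of the expected shortfall, with values in `[0,∞]`. -/
def sigmaSq (α : ℝ) (μ : Measure ℝ) : ℝ≥0∞ :=
  ENNReal.ofReal (1 / α ^ 2) *
    ∫⁻ t in Set.Ioi (VaR μ (1 - α)), ∫⁻ s in Set.Ioi (VaR μ (1 - α)),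
      ENNReal.ofReal (distCdf μ (min t s) - distCdf μ t * distCdf μ s)

/-- The standard deviation `σ_{ES_α}`. -/
def sigmaES (α : ℝ) (μ : Measure ℝ) : ℝ := Real.sqrt (sigmaSq α μ).toReal

/-- Empirical cdf of the first `N` entries of the data `x`. -/
def empCdf (N : ℕ) (x : ℕ → ℝ) (t : ℝ) : ℝ :=
  ((Finset.range N).filter fun i => x i ≤ t).card / N

/-- Generalized inverse of the empirical cdf. -/
def empInv (N : ℕ) (x : ℕ → ℝ) (u : ℝ) : ℝ := sInf {t : ℝ | u ≤ empCdf N x t}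

/-- The plug-in estimator of the expected shortfall from the first `N` data points of `x`. -/
def plugIn (α : ℝ) (N : ℕ) (x : ℕ → ℝ) : ℝ :=
  (1 / α) * ∫ u in Set.Ioo (1 - α) 1, empInv N x u

/-- The plug-in estimator on the `j`-th block (0-based) of size `m`. -/
def blockEst (α : ℝ) (m : ℕ) (x : ℕ → ℝ) (j : ℕ) : ℝ :=
  plugIn α m (fun i => x (j * m + i))

/-- The order statistics (sorted list) of `v 0, …, v (n-1)`. -/
def sortedVals (n : ℕ) (v : ℕ → ℝ) : List ℝ :=
  List.insertionSort (· ≤ ·) ((List.range n).map v)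

/-- The linearly interpolated empirical quantile function `Q̂` of the values `v 0, …, v (n-1)`:
`Q̂((j-1)/(n-1))` equals the `j`-th order statistic (1-based), interpolated linearly in between. -/
def interpQ (n : ℕ) (v : ℕ → ℝ) (β : ℝ) : ℝ :=
  let l := sortedVals n v
  let t := β * ((n : ℝ) - 1)
  let k := ⌊t⌋₊
  l.getD k 0 + (t - (k : ℝ)) * (l.getD (k + 1) (l.getD k 0) - l.getD k 0)

/-- The proposed estimator `Ŝ_N` with accuracy parameter `ε` and hyperparameters `β₁ ≤ β₂`:
the plug-in estimator truncated to `[Q̂(β₁), Q̂(β₂)]`, where `Q̂` is the interpolated quantile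
function of the block-wise plug-in estimators on `n = ⌊N/m⌋` disjoint blocks of size
`m = ⌈11/ε²⌉`. -/
def propEst (α ε β₁ β₂ : ℝ) (N : ℕ) (x : ℕ → ℝ) : ℝ :=
  let m := ⌈(11 : ℝ) / ε ^ 2⌉₊
  let n := N / m
  min (max (plugIn α N x) (interpQ n (blockEst α m x) β₁)) (interpQ n (blockEst α m x) β₂)

/-- Extension of a finite data vector to `ℕ → ℝ` (by `0` outside). -/
def pad (N : ℕ) (x : Fin N → ℝ) : ℕ → ℝ := fun i => if h : i < N then x ⟨i, h⟩ else 0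

/-- **Expected shortfall and variance of scaled Bernoulli distributions.** If
`X ~ B(p, x)` (i.e. `P(X = 0) = 1 - p`, `P(X = x) = p`), then
`ES_α(X) = x min{1, p/α}`, and `σ²_{ES_α(X)} = x²(p - p²)/α²` if `p ≤ α`, `= 0` if `p > α`. -/
theorem es_sigmaSq_bernoulli
    (α p x : ℝ) (hα : α ∈ Set.Ioo (0 : ℝ) (1 / 2)) (hp : p ∈ Set.Icc (0 : ℝ) 1) (hx : 0 < x)
    (μ : Measure ℝ) [IsProbabilityMeasure μ]
    (h0 : μ {0} = ENNReal.ofReal (1 - p)) (hxp : μ {x} = ENNReal.ofReal p) :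
    ES α μ = x * min 1 (p / α) ∧
      (p ≤ α → sigmaSq α μ = ENNReal.ofReal (x ^ 2 * (p - p ^ 2) / α ^ 2)) ∧
      (α < p → sigmaSq α μ = 0) := by
  obtain ⟨hα0, hα2⟩ := hα
  obtain ⟨hp0, hp1⟩ := hp
  have hα1 : α < 1 := by linarith
  -- the cdf of the scaled Bernoulli distribution
  have hpair : μ ({0, x} : Set ℝ) = 1 := by
    rw [Set.insert_eq, measure_union (by simp [Set.disjoint_singleton, hx.ne])
      (measurableSet_singleton x), h0, hxp, ← ENNReal.ofReal_add (by linarith) hp0]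
    norm_num
  have hcomp : μ ({0, x} : Set ℝ)ᶜ = 0 := by
    rw [measure_compl (by measurability) (measure_ne_top μ _), hpair, measure_univ, tsub_self]
  have hF : ∀ t : ℝ, distCdf μ t = if t < 0 then 0 else if t < x then 1 - p else 1 := by
    intro t
    have key : μ (Set.Iic t) = μ (Set.Iic t ∩ {0, x}) := (measure_inter_conull hcomp).symm
    unfold distCdf
    rw [key]
    split_ifs with h1 h2
    · have hset : Set.Iic t ∩ {0, x} = ∅ := by
        ext a
        simp only [Set.mem_inter_iff, Set.mem_Iic, Set.mem_insert_iff, Set.mem_singleton_iff,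
          Set.mem_empty_iff_false, iff_false, not_and]
        rintro ha (rfl | rfl) <;> linarith
      simp [hset]
    · push_neg at h1
      have hset : Set.Iic t ∩ {0, x} = {0} := by
        ext a
        simp only [Set.mem_inter_iff, Set.mem_Iic, Set.mem_insert_iff, Set.mem_singleton_iff]
        constructor
        · rintro ⟨ha, rfl | rfl⟩
          · rfl
          · linarith
        · rintro rfl; exact ⟨h1, Or.inl rfl⟩
      rw [hset, h0, ENNReal.toReal_ofReal (by linarith)]
    · push_neg at h1 h2
      have hset : Set.Iic t ∩ {0, x} = {0, x} := by
        rw [Set.inter_eq_right]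
        rintro a (rfl | rfl)
        · simp only [Set.mem_Iic]; linarith
        · simpa using h2
      rw [hset, hpair]; simp
  have hF1 : ∀ a : ℝ, 0 < a → a < x → distCdf μ a = 1 - p := by
    intro a h1 h2; rw [hF, if_neg (by linarith), if_pos h2]
  have hF2 : ∀ a : ℝ, x ≤ a → distCdf μ a = 1 := by
    intro a h1; rw [hF, if_neg (by linarith), if_neg (by linarith)]
  -- the VaR
  have hV0 : ∀ u : ℝ, 0 < u → u ≤ 1 - p → VaR μ u = 0 := by
    intro u hu hup
    have hset : {t : ℝ | u ≤ distCdf μ t} = Set.Ici 0 := by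
      ext t
      simp only [Set.mem_setOf_eq, Set.mem_Ici, hF t]
      split_ifs with h1 h2
      · constructor <;> intro h <;> linarith
      · constructor <;> intro h <;> linarith
      · constructor <;> intro h <;> linarith
    rw [VaR, hset, csInf_Ici]
  have hVx : ∀ u : ℝ, 1 - p < u → u ≤ 1 → VaR μ u = x := by
    intro u hup hu1
    have hset : {t : ℝ | u ≤ distCdf μ t} = Set.Ici x := by
      ext t
      simp only [Set.mem_setOf_eq, Set.mem_Ici, hF t]
      split_ifs with h1 h2
      · constructor <;> intro h <;> linarith
      · constructor <;> intro h <;> linarith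
      · constructor <;> intro h <;> linarith
    rw [VaR, hset, csInf_Ici]
  -- expected shortfall
  have hES : ES α μ = x * min 1 (p / α) := by
    have hcong : Set.EqOn (VaR μ) ((Set.Ioi (1 - p)).indicator fun _ => x)
        (Set.Ioo (1 - α) 1) := by
      intro u hu
      obtain ⟨hu1, hu2⟩ := hu
      by_cases h : u ≤ 1 - p
      · rw [hV0 u (by linarith) h, Set.indicator_of_notMem (by simpa using h)]
      · push_neg at h
        rw [hVx u h hu2.le, Set.indicator_of_mem (Set.mem_Ioi.mpr h)]
    rw [ES, setIntegral_congr_fun measurableSet_Ioo hcong,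
      setIntegral_indicator measurableSet_Ioi]
    have hinter : Set.Ioo (1 - α) 1 ∩ Set.Ioi (1 - p) = Set.Ioo (max (1 - α) (1 - p)) 1 := by
      ext u
      simp only [Set.mem_inter_iff, Set.mem_Ioo, Set.mem_Ioi, max_lt_iff]
      tauto
    rw [hinter, setIntegral_const, Real.volume_real_Ioo_of_le (max_le (by linarith) (by linarith)), smul_eq_mul,
      max_sub_sub_left, sub_sub_cancel]
    rcases le_total p α with h | h
    · rw [min_eq_right h, min_eq_right (by rw [div_le_one hα0]; exact h)]
      field_simp
    · rw [min_eq_left h, min_eq_left ((le_div_iff₀ hα0).mpr (by linarith))]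
      field_simp
  refine ⟨hES, ?_, ?_⟩
  · -- variance, case p ≤ α
    intro hpa
    have hV : VaR μ (1 - α) = 0 := hV0 _ (by linarith) (by linarith)
    have hppn : (0 : ℝ) ≤ p - p ^ 2 := by nlinarith
    rw [sigmaSq, hV]
    have hinner : ∀ t ∈ Set.Ioi (0 : ℝ),
        (∫⁻ s in Set.Ioi (0 : ℝ),
            ENNReal.ofReal (distCdf μ (min t s) - distCdf μ t * distCdf μ s))
          = (Set.Iio x).indicator (fun _ => ENNReal.ofReal (p - p ^ 2) * ENNReal.ofReal x) t := by
      intro t ht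
      simp only [Set.mem_Ioi] at ht
      by_cases htx : t < x
      · have hstep : ∀ s ∈ Set.Ioi (0 : ℝ),
            ENNReal.ofReal (distCdf μ (min t s) - distCdf μ t * distCdf μ s)
              = (Set.Iio x).indicator (fun _ => ENNReal.ofReal (p - p ^ 2)) s := by
          intro s hs
          simp only [Set.mem_Ioi] at hs
          by_cases hsx : s < x
          · rw [Set.indicator_of_mem (Set.mem_Iio.mpr hsx), hF1 t ht htx, hF1 s hs hsx,
              hF1 _ (lt_min ht hs) (min_lt_of_left_lt htx)]
            congr 1; ring
          · push_neg at hsx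
            rw [Set.indicator_of_notMem (by simpa using hsx), hF1 t ht htx, hF2 s hsx,
              min_eq_left (by linarith), hF1 t ht htx]
            rw [show (1 : ℝ) - p - (1 - p) * 1 = 0 by ring, ENNReal.ofReal_zero]
        rw [setLIntegral_congr_fun_ae measurableSet_Ioi (ae_of_all _ hstep),
          Set.indicator_of_mem (Set.mem_Iio.mpr htx), lintegral_indicator measurableSet_Iio,
          Measure.restrict_restrict measurableSet_Iio, setLIntegral_const,
          Set.Iio_inter_Ioi, Real.volume_Ioo, sub_zero]
      · push_neg at htx
        have hstep : ∀ s ∈ Set.Ioi (0 : ℝ),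
            ENNReal.ofReal (distCdf μ (min t s) - distCdf μ t * distCdf μ s) = 0 := by
          intro s hs
          simp only [Set.mem_Ioi] at hs
          by_cases hsx : s < x
          · rw [hF2 t htx, hF1 s hs hsx, min_eq_right (by linarith), hF1 s hs hsx,
              show (1 : ℝ) - p - 1 * (1 - p) = 0 by ring, ENNReal.ofReal_zero]
          · push_neg at hsx
            rw [hF2 t htx, hF2 s hsx, hF2 _ (le_min htx hsx),
              show (1 : ℝ) - 1 * 1 = 0 by ring, ENNReal.ofReal_zero]
        rw [setLIntegral_congr_fun_ae measurableSet_Ioi (ae_of_all _ hstep), lintegral_zero,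
          Set.indicator_of_notMem (by simpa using htx)]
    rw [setLIntegral_congr_fun_ae measurableSet_Ioi (ae_of_all _ hinner),
      lintegral_indicator measurableSet_Iio,
      Measure.restrict_restrict measurableSet_Iio, setLIntegral_const,
      Set.Iio_inter_Ioi, Real.volume_Ioo, sub_zero,
      ← ENNReal.ofReal_mul hppn, ← ENNReal.ofReal_mul (by positivity),
      ← ENNReal.ofReal_mul (by positivity),
      show 1 / α ^ 2 * ((p - p ^ 2) * x * x) = x ^ 2 * (p - p ^ 2) / α ^ 2 by ring]
  · -- variance, case α < p
    intro hpa
    have hV : VaR μ (1 - α) = x := hVx _ (by linarith) (by linarith)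
    rw [sigmaSq, hV]
    have hzero : ∀ t ∈ Set.Ioi x,
        (∫⁻ s in Set.Ioi x,
            ENNReal.ofReal (distCdf μ (min t s) - distCdf μ t * distCdf μ s)) = 0 := by
      intro t ht
      simp only [Set.mem_Ioi] at ht
      have hstep : ∀ s ∈ Set.Ioi x,
          ENNReal.ofReal (distCdf μ (min t s) - distCdf μ t * distCdf μ s) = 0 := by
        intro s hs
        simp only [Set.mem_Ioi] at hs
        rw [hF2 t ht.le, hF2 s hs.le, hF2 _ (le_min ht.le hs.le),
          show (1 : ℝ) - 1 * 1 = 0 by ring, ENNReal.ofReal_zero]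
      rw [setLIntegral_congr_fun_ae measurableSet_Ioi (ae_of_all _ hstep), lintegral_zero]
    rw [setLIntegral_congr_fun_ae measurableSet_Ioi (ae_of_all _ hzero), lintegral_zero, mul_zero]
end
end

section
/- Let α ≤ 1/10 with α ∈ (0,1/2), let ε ≤ (1/2)√α, and assume N ε² ≥ 5. Then there exists a real-valued random variable X such that σ_{ES_α(X)} = 1, such that F_X^{−1} is 1-Lipschitz on [1−2α, 1−α/2], and such that the plug-in estimator built from N i.i.d. copies of X satisfies P(|T̂_N − ES_α(X)| ≥ ε σ_{ES_α(X)}) ≥ 1/(16 N ε²). -/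
open MeasureTheory ProbabilityTheory Set Filter Topology
open scoped ENNReal NNReal

noncomputable section

namespace PIA

def bm (q M : ℝ) : Measure ℝ :=
  ENNReal.ofReal (1 - q) • Measure.dirac 0 + ENNReal.ofReal q • Measure.dirac M

open scoped Classical in
lemma bm_apply (q M : ℝ) {s : Set ℝ} (hs : MeasurableSet s) :
    bm q M s = (if (0:ℝ) ∈ s then ENNReal.ofReal (1 - q) else 0)
      + (if M ∈ s then ENNReal.ofReal q else 0) := by
  rw [bm, Measure.add_apply, Measure.smul_apply, Measure.smul_apply,
    Measure.dirac_apply' _ hs, Measure.dirac_apply' _ hs]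
  simp [Set.indicator_apply]

lemma bm_isProb (q : ℝ) (hq0 : 0 ≤ q) (hq1 : q ≤ 1) (M : ℝ) :
    IsProbabilityMeasure (bm q M) := by
  constructor
  rw [bm_apply q M MeasurableSet.univ]
  simp [← ENNReal.ofReal_add (by linarith : (0:ℝ) ≤ 1 - q) hq0]

lemma cdf_neg (q M : ℝ) (hM : 0 < M) {t : ℝ} (ht : t < 0) : distCdf (bm q M) t = 0 := by
  rw [distCdf, bm_apply q M measurableSet_Iic]
  rw [if_neg (by simpa using not_le.2 ht), if_neg (by simpa using not_le.2 (ht.trans hM))]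
  simp

lemma cdf_mid (q M : ℝ) (hq0 : 0 ≤ q) (hq1 : q ≤ 1) {t : ℝ} (ht0 : 0 ≤ t) (htM : t < M) :
    distCdf (bm q M) t = 1 - q := by
  rw [distCdf, bm_apply q M measurableSet_Iic]
  rw [if_pos (by simpa using ht0), if_neg (by simpa using not_le.2 htM)]
  simp [ENNReal.toReal_ofReal (by linarith : (0:ℝ) ≤ 1 - q)]

lemma cdf_top (q M : ℝ) (hq0 : 0 ≤ q) (hq1 : q ≤ 1) (hM : 0 ≤ M) {t : ℝ} (ht : M ≤ t) :
    distCdf (bm q M) t = 1 := by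
  rw [distCdf, bm_apply q M measurableSet_Iic]
  rw [if_pos (by simpa using hM.trans ht), if_pos (by simpa using ht)]
  rw [← ENNReal.ofReal_add (by linarith) hq0]
  simp

lemma var_zero (q M : ℝ) (hq0 : 0 ≤ q) (hq1 : q ≤ 1) (hM : 0 < M) {u : ℝ}
    (hu0 : 0 < u) (hu : u ≤ 1 - q) : VaR (bm q M) u = 0 := by
  have hset : {t : ℝ | u ≤ distCdf (bm q M) t} = Ici 0 := by
    ext t
    simp only [mem_setOf_eq, mem_Ici]
    constructor
    · intro h
      by_contra ht
      push_neg at ht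
      rw [cdf_neg q M hM ht] at h
      linarith
    · intro ht
      rcases lt_or_ge t M with h | h
      · rw [cdf_mid q M hq0 hq1 ht h]; exact hu
      · rw [cdf_top q M hq0 hq1 hM.le h]; linarith
  rw [VaR, hset, csInf_Ici]

lemma var_M (q M : ℝ) (hq0 : 0 ≤ q) (hq1 : q ≤ 1) (hM : 0 < M) {u : ℝ}
    (hu0 : 1 - q < u) (hu : u ≤ 1) : VaR (bm q M) u = M := by
  have hu0' : 0 < u := lt_of_le_of_lt (by linarith) hu0
  have hset : {t : ℝ | u ≤ distCdf (bm q M) t} = Ici M := by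
    ext t
    simp only [mem_setOf_eq, mem_Ici]
    constructor
    · intro h
      by_contra ht
      push_neg at ht
      rcases lt_or_ge t 0 with h0 | h0
      · rw [cdf_neg q M hM h0] at h; linarith
      · rw [cdf_mid q M hq0 hq1 h0 ht] at h; linarith
    · intro ht
      rw [cdf_top q M hq0 hq1 hM.le ht]; exact hu
  rw [VaR, hset, csInf_Ici]

lemma es_eq (α q M : ℝ) (hq0 : 0 ≤ q) (hM : 0 < M) (hα0 : 0 < α) (hα1 : α < 1)
    (hqα : q < α) : ES α (bm q M) = M * q / α := by
  have h1 : EqOn (fun u => VaR (bm q M) u) ((Ioi (1-q)).indicator fun _ => M)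
      (Ioo (1-α) (1:ℝ)) := by
    intro u hu
    simp only [mem_Ioo] at hu
    show VaR (bm q M) u = _
    rcases le_or_gt u (1-q) with h | h
    · rw [var_zero q M hq0 (by linarith) hM (by linarith) h]
      simp [Set.indicator_apply, not_lt.2 h]
    · rw [var_M q M hq0 (by linarith) hM h hu.2.le]
      simp [Set.indicator_apply, h]
  rw [ES, setIntegral_congr_fun measurableSet_Ioo h1,
    setIntegral_indicator measurableSet_Ioi, Set.Ioo_inter_Ioi,
    max_eq_right (by linarith : (1:ℝ) - α ≤ 1 - q), setIntegral_const,
    Real.volume_real_Ioo_of_le (by linarith), smul_eq_mul]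
  ring

end PIA
namespace PIA

lemma sigma_eq (α q M : ℝ) (hq0 : 0 ≤ q) (hq1 : q ≤ 1) (hM : 0 < M) (hα0 : 0 < α)
    (hα1 : α < 1) (hqα : q ≤ α) :
    sigmaSq α (bm q M) = ENNReal.ofReal ((1 - q) * q * M ^ 2 / α ^ 2) := by
  have hvar : VaR (bm q M) (1 - α) = 0 :=
    var_zero q M hq0 hq1 hM (by linarith) (by linarith)
  have hinner : ∀ t ∈ Ioi (0:ℝ),
      (∫⁻ s in Ioi (0:ℝ), ENNReal.ofReal
        (distCdf (bm q M) (min t s) - distCdf (bm q M) t * distCdf (bm q M) s))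
      = (Iio M).indicator (fun _ => ENNReal.ofReal ((1 - q) * q * M)) t := by
    intro t ht
    simp only [mem_Ioi] at ht
    rcases lt_or_ge t M with htM | htM
    · have hcong : ∀ s ∈ Ioi (0:ℝ),
          ENNReal.ofReal (distCdf (bm q M) (min t s) - distCdf (bm q M) t * distCdf (bm q M) s)
          = (Iio M).indicator (fun _ => ENNReal.ofReal ((1 - q) * q)) s := by
        intro s hs
        simp only [mem_Ioi] at hs
        rcases lt_or_ge s M with hsM | hsM
        · have hmin0 : (0:ℝ) ≤ min t s := le_min ht.le hs.le
          have hminM : min t s < M := lt_of_le_of_lt (min_le_left _ _) htM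
          rw [cdf_mid q M hq0 hq1 hmin0 hminM, cdf_mid q M hq0 hq1 ht.le htM,
            cdf_mid q M hq0 hq1 hs.le hsM]
          rw [Set.indicator_of_mem (mem_Iio.2 hsM)]
          congr 1
          ring
        · have hmin : min t s = t := min_eq_left (htM.le.trans hsM)
          rw [hmin, cdf_mid q M hq0 hq1 ht.le htM, cdf_top q M hq0 hq1 hM.le hsM]
          rw [Set.indicator_of_notMem (by simpa using hsM)]
          simp
      rw [setLIntegral_congr_fun measurableSet_Ioi hcong]
      rw [lintegral_indicator measurableSet_Iio, Measure.restrict_restrict measurableSet_Iio,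
        lintegral_const, Measure.restrict_apply MeasurableSet.univ, Set.univ_inter,
        Set.Iio_inter_Ioi, Real.volume_Ioo]
      rw [Set.indicator_of_mem (mem_Iio.2 htM)]
      rw [← ENNReal.ofReal_mul (by nlinarith)]
      congr 1
      ring
    · have hcong : ∀ s ∈ Ioi (0:ℝ),
          ENNReal.ofReal (distCdf (bm q M) (min t s) - distCdf (bm q M) t * distCdf (bm q M) s)
          = 0 := by
        intro s hs
        simp only [mem_Ioi] at hs
        rcases lt_or_ge s M with hsM | hsM
        · have hmin : min t s = s := min_eq_right (hsM.le.trans htM)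
          rw [hmin, cdf_mid q M hq0 hq1 hs.le hsM, cdf_top q M hq0 hq1 hM.le htM]
          simp
        · have hmin : M ≤ min t s := le_min htM hsM
          rw [cdf_top q M hq0 hq1 hM.le hmin, cdf_top q M hq0 hq1 hM.le htM,
            cdf_top q M hq0 hq1 hM.le hsM]
          simp
      rw [setLIntegral_congr_fun measurableSet_Ioi hcong, lintegral_zero]
      rw [Set.indicator_of_notMem (by simpa using htM)]
  rw [sigmaSq, hvar, setLIntegral_congr_fun measurableSet_Ioi hinner]
  rw [lintegral_indicator measurableSet_Iio, Measure.restrict_restrict measurableSet_Iio,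
    lintegral_const, Measure.restrict_apply MeasurableSet.univ, Set.univ_inter,
    Set.Iio_inter_Ioi, Real.volume_Ioo]
  rw [← ENNReal.ofReal_mul (mul_nonneg (mul_nonneg (by linarith : (0:ℝ) ≤ 1 - q) hq0) hM.le),
    ← ENNReal.ofReal_mul (by positivity)]
  congr 1
  field_simp
  ring

lemma sigmaES_eq_one (α q : ℝ) (hq0 : 0 < q) (hq1 : q < 1) (hα0 : 0 < α) (hα1 : α < 1)
    (hqα : q ≤ α) :
    sigmaES α (bm q (α / Real.sqrt (q * (1 - q)))) = 1 := by
  have hq1q : 0 < q * (1 - q) := by nlinarith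
  have hs : 0 < Real.sqrt (q * (1 - q)) := Real.sqrt_pos.2 hq1q
  have hM : 0 < α / Real.sqrt (q * (1 - q)) := by positivity
  rw [sigmaES, sigma_eq α q _ hq0.le hq1.le hM hα0 hα1 hqα]
  have hMsq : (α / Real.sqrt (q * (1 - q))) ^ 2 = α ^ 2 / (q * (1 - q)) := by
    rw [div_pow, Real.sq_sqrt hq1q.le]
  rw [hMsq]
  have : (1 - q) * q * (α ^ 2 / (q * (1 - q))) / α ^ 2 = 1 := by
    have hq1' : (1:ℝ) - q ≠ 0 := by linarith
    field_simp
  rw [this]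
  simp

end PIA
namespace PIA

variable {N : ℕ} {y : ℕ → ℝ} {M : ℝ}

lemma empCdf_neg (hy0 : ∀ i, 0 ≤ y i) {b : ℝ} (hb : b < 0) : empCdf N y b = 0 := by
  rw [empCdf, Finset.filter_false_of_mem fun i _ => by
    simpa using lt_of_lt_of_le hb (hy0 i)]
  simp

lemma empCdf_M (hN : 0 < N) (hyle : ∀ i < N, y i ≤ M) : empCdf N y M = 1 := by
  rw [empCdf, Finset.filter_true_of_mem fun i hi => hyle i (Finset.mem_range.1 hi)]
  rw [Finset.card_range, div_self (by exact_mod_cast hN.ne')]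

lemma mem_empInv_set (hN : 0 < N) (hyle : ∀ i < N, y i ≤ M) {u : ℝ} (hu1 : u ≤ 1) :
    M ∈ {t : ℝ | u ≤ empCdf N y t} := by
  rw [mem_setOf_eq, empCdf_M hN hyle]; exact hu1

lemma empInv_nonneg (hN : 0 < N) (hy0 : ∀ i, 0 ≤ y i) (hyle : ∀ i < N, y i ≤ M)
    {u : ℝ} (hu0 : 0 < u) (hu1 : u ≤ 1) : 0 ≤ empInv N y u := by
  refine le_csInf ⟨M, mem_empInv_set hN hyle hu1⟩ fun b hb => ?_
  by_contra hbneg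
  push_neg at hbneg
  rw [mem_setOf_eq, empCdf_neg hy0 hbneg] at hb
  linarith

lemma empInv_ge (hN : 0 < N) (hyle : ∀ i < N, y i ≤ M)
    {i₀ : ℕ} (hi₀ : i₀ < N) (hyi₀ : y i₀ = M)
    {u : ℝ} (hu : 1 - 1 / (N:ℝ) < u) (hu1 : u ≤ 1) : M ≤ empInv N y u := by
  refine le_csInf ⟨M, mem_empInv_set hN hyle hu1⟩ fun b hb => ?_
  rw [mem_setOf_eq, empCdf] at hb
  set c := ((Finset.range N).filter fun i => y i ≤ b).card with hc
  have hN0 : (0:ℝ) < N := by exact_mod_cast hN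
  have h1 : 1 - 1 / (N:ℝ) < (c:ℝ) / N := lt_of_lt_of_le hu hb
  have h2 : (N:ℝ) < (c:ℝ) + 1 := by
    have := mul_lt_mul_of_pos_right h1 hN0
    rw [sub_mul, one_mul, div_mul_cancel₀ _ hN0.ne', div_mul_cancel₀ _ hN0.ne'] at this
    linarith
  have h3 : N ≤ c := by
    have : N < c + 1 := by exact_mod_cast h2
    omega
  have hfe : (Finset.range N).filter (fun i => y i ≤ b) = Finset.range N :=
    Finset.eq_of_subset_of_card_le (Finset.filter_subset _ _)
      (by rw [Finset.card_range]; exact h3)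
  have hmem : i₀ ∈ (Finset.range N).filter (fun i => y i ≤ b) := by
    rw [hfe]; exact Finset.mem_range.2 hi₀
  rw [← hyi₀]
  exact (Finset.mem_filter.1 hmem).2

lemma empInv_monoOn (hN : 0 < N) (hy0 : ∀ i, 0 ≤ y i) (hyle : ∀ i < N, y i ≤ M) {a : ℝ}
    (ha : 0 < a) : MonotoneOn (fun u => empInv N y u) (Icc a 1) := by
  intro u hu v hv huv
  exact csInf_le_csInf ⟨0, fun b hb => by
      by_contra hbneg
      push_neg at hbneg
      rw [mem_setOf_eq, empCdf_neg hy0 hbneg] at hb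
      have : (0:ℝ) < u := lt_of_lt_of_le ha hu.1
      linarith⟩
    ⟨M, mem_empInv_set hN hyle hv.2⟩
    fun t ht => le_trans huv ht

lemma plugin_ge (α : ℝ) (hα0 : 0 < α) (hα1 : α < 1) (hN : 0 < N) (hNα : 1 / (N:ℝ) ≤ α)
    (hM : 0 < M) (hy : ∀ i, y i = 0 ∨ y i = M)
    {i₀ : ℕ} (hi₀ : i₀ < N) (hyi₀ : y i₀ = M) :
    M / (N * α) ≤ plugIn α N y := by
  have hN0 : (0:ℝ) < N := by exact_mod_cast hN
  have hy0 : ∀ i, 0 ≤ y i := fun i => by rcases hy i with h | h <;> rw [h] <;> linarith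
  have hyle : ∀ i < N, y i ≤ M := fun i _ => by rcases hy i with h | h <;> rw [h] <;> linarith
  have hint_emp : IntegrableOn (fun u => empInv N y u) (Ioo (1-α) 1) volume :=
    (MonotoneOn.integrableOn_isCompact isCompact_Icc
      (empInv_monoOn hN hy0 hyle (by linarith))).mono_set Ioo_subset_Icc_self
  have hint_g : IntegrableOn ((Ioi (1 - 1/(N:ℝ))).indicator fun _ => M) (Ioo (1-α) 1) volume :=
    (integrableOn_const (by rw [Real.volume_Ioo]; exact ENNReal.ofReal_ne_top)).indicator
      measurableSet_Ioi
  have hle : ∀ u ∈ Ioo (1-α) (1:ℝ),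
      ((Ioi (1 - 1/(N:ℝ))).indicator fun _ => M) u ≤ empInv N y u := by
    intro u hu
    simp only [mem_Ioo] at hu
    rcases le_or_gt u (1 - 1/(N:ℝ)) with h | h
    · rw [Set.indicator_of_notMem (by simpa using h)]
      exact empInv_nonneg hN hy0 hyle (by linarith) hu.2.le
    · rw [Set.indicator_of_mem (mem_Ioi.2 h)]
      exact empInv_ge hN hyle hi₀ hyi₀ h hu.2.le
  have hmono := setIntegral_mono_on hint_g hint_emp measurableSet_Ioo hle
  have hg : ∫ u in Ioo (1-α) 1, ((Ioi (1 - 1/(N:ℝ))).indicator fun _ => M) u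
      = M / N := by
    rw [setIntegral_indicator measurableSet_Ioi, Set.Ioo_inter_Ioi,
      max_eq_right (by rw [sub_le_sub_iff_left]; exact hNα), setIntegral_const,
      Real.volume_real_Ioo_of_le (by linarith [(by positivity : (0:ℝ) ≤ 1/(N:ℝ))]), show (1:ℝ) - (1 - 1/(N:ℝ)) = 1/N by ring,
      smul_eq_mul]
    ring
  rw [plugIn]
  have hfin := mul_le_mul_of_nonneg_left hmono (by positivity : (0:ℝ) ≤ 1/α)
  rw [hg] at hfin
  calc M / (N*α) = (1/α) * (M/(N:ℝ)) := by ring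
    _ ≤ _ := hfin

end PIA

set_option maxHeartbeats 2000000

/-- **Minimax lower bound for the plug-in estimator.** For `α ≤ 1/10`, `ε ≤ √α/2` and
`N ε² ≥ 5`, there is a distribution with `σ_{ES_α} = 1` and `1`-Lipschitz quantile function on
`[1-2α, 1-α/2]` such that the plug-in estimator from `N` i.i.d. samples satisfies
`P(|T̂_N - ES_α(X)| ≥ ε σ_{ES_α(X)}) ≥ 1/(16 N ε²)`. -/
theorem plugIn_minimax_lower_bound
    (α ε : ℝ) (hα : α ∈ Set.Ioo (0 : ℝ) (1 / 2)) (hα10 : α ≤ 1 / 10)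
    (hε : 0 < ε) (hεα : ε ≤ Real.sqrt α / 2)
    (N : ℕ) (hN : (5 : ℝ) ≤ N * ε ^ 2) :
    ∃ μ : Measure ℝ, IsProbabilityMeasure μ ∧
      sigmaES α μ = 1 ∧
      LipschitzOnWith 1 (fun u => VaR μ u) (Set.Icc (1 - 2 * α) (1 - α / 2)) ∧
      1 / (16 * N * ε ^ 2) ≤
        ((Measure.pi fun _ : Fin N => μ)
          {x | ε * sigmaES α μ ≤ |plugIn α N (pad N x) - ES α μ|}).toReal := by
  obtain ⟨hα0, hα2⟩ := hα
  have hN0 : 0 < N := by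
    rcases Nat.eq_zero_or_pos N with h | h
    · subst h; norm_num at hN
    · exact h
  have hNr : (0:ℝ) < N := by exact_mod_cast hN0
  have hε2 : ε ^ 2 ≤ α / 4 := by
    have h1 : ε ^ 2 ≤ (Real.sqrt α / 2) ^ 2 := pow_le_pow_left₀ hε.le hεα 2
    rw [div_pow, Real.sq_sqrt hα0.le] at h1
    linarith
  have hε2pos : 0 < ε ^ 2 := by positivity
  have hNa : (20:ℝ) ≤ (N:ℝ) * α := by nlinarith
  have hNinv : 1 / (N:ℝ) ≤ α / 20 := by
    rw [div_le_div_iff₀ hNr (by norm_num)]; nlinarith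
  have hNinvα : 1 / (N:ℝ) ≤ α := by linarith [hNinv, hα0]
  obtain ⟨q, hqdef⟩ : ∃ q : ℝ, q = 1 / (8 * (N:ℝ) ^ 2 * ε ^ 2) := ⟨_, rfl⟩
  have hq0 : 0 < q := by rw [hqdef]; positivity
  have hq40 : q ≤ 1 / (40 * (N:ℝ)) := by
    rw [hqdef, div_le_div_iff₀ (by positivity) (by positivity)]
    nlinarith
  have e2 : (1:ℝ) / (40 * (N:ℝ)) = (1 / (N:ℝ)) / 40 := by ring
  have hqα : q ≤ α / 2 := by
    rw [e2] at hq40; linarith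
  have hq1 : q < 1 := by
    rw [e2] at hq40
    have : (1:ℝ) / (N:ℝ) ≤ 1 := by
      rw [div_le_one hNr]; exact_mod_cast hN0
    linarith
  have hq1q : 0 < q * (1 - q) := by nlinarith
  obtain ⟨s, hsdef⟩ : ∃ s : ℝ, s = Real.sqrt (q * (1 - q)) := ⟨_, rfl⟩
  have hs0 : 0 < s := hsdef ▸ Real.sqrt_pos.2 hq1q
  obtain ⟨M, hMdef⟩ : ∃ M : ℝ, M = α / s := ⟨_, rfl⟩
  have hM : 0 < M := by rw [hMdef]; positivity
  have hσ : sigmaES α (PIA.bm q M) = 1 := by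
    rw [hMdef, hsdef]
    exact PIA.sigmaES_eq_one α q hq0 hq1 hα0 (by linarith) (by linarith)
  have hES : ES α (PIA.bm q M) = M * q / α :=
    PIA.es_eq α q M hq0.le hM hα0 (by linarith) (by linarith)
  refine ⟨PIA.bm q M, PIA.bm_isProb q hq0.le hq1.le M, hσ, ?_, ?_⟩
  · -- Lipschitz
    intro u hu v hv
    simp only [Set.mem_Icc] at hu hv
    have h1 : VaR (PIA.bm q M) u = 0 :=
      PIA.var_zero q M hq0.le hq1.le hM (by linarith [hu.1]) (by linarith [hu.2])
    have h2 : VaR (PIA.bm q M) v = 0 :=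
      PIA.var_zero q M hq0.le hq1.le hM (by linarith [hv.1]) (by linarith [hv.2])
    simp [h1, h2]
  · -- probability bound
    -- arithmetic core
    have h2 : ε ^ 2 * q = 1 / (8 * (N:ℝ) ^ 2) := by
      rw [hqdef]; field_simp
    have h3 : Real.sqrt (ε ^ 2 * q) ≤ 1 / (2 * (N:ℝ)) := by
      rw [h2]
      have hsq : ((1:ℝ) / (2 * (N:ℝ))) ^ 2 = 1 / (4 * (N:ℝ)^2) := by
        rw [div_pow, one_pow]; ring_nf
      calc Real.sqrt (1 / (8 * (N:ℝ) ^ 2))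
          ≤ Real.sqrt ((1 / (2 * (N:ℝ))) ^ 2) := by
            apply Real.sqrt_le_sqrt
            rw [hsq]
            exact one_div_le_one_div_of_le (by positivity) (by nlinarith)
        _ = 1 / (2 * (N:ℝ)) := Real.sqrt_sq (by positivity)
    have h1 : ε * s ≤ 1 / (2 * (N:ℝ)) := by
      have hsq : s ≤ Real.sqrt q := by
        rw [hsdef]
        exact Real.sqrt_le_sqrt (by nlinarith [sq_nonneg q])
      have hεq : ε * Real.sqrt q = Real.sqrt (ε ^ 2 * q) := by
        rw [Real.sqrt_mul (sq_nonneg ε), Real.sqrt_sq hε.le]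
      calc ε * s ≤ ε * Real.sqrt q := mul_le_mul_of_nonneg_left hsq hε.le
        _ = Real.sqrt (ε ^ 2 * q) := hεq
        _ ≤ 1 / (2 * (N:ℝ)) := h3
    have e1 : (1:ℝ) / (2 * (N:ℝ)) = (1 / (N:ℝ)) / 2 := by ring
    have h5 : ε * s ≤ 1 / (N:ℝ) - q := by
      rw [e1] at h1; rw [e2] at hq40
      have : (0:ℝ) < 1 / (N:ℝ) := by positivity
      linarith
    have harith : ε + M * q / α ≤ M / ((N:ℝ) * α) := by
      have h9 : ε ≤ (1 / (N:ℝ) - q) / s := (le_div_iff₀ hs0).2 h5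
      have eM1 : M / ((N:ℝ) * α) = (1 / (N:ℝ)) / s := by
        rw [hMdef]; field_simp
      have eM2 : M * q / α = q / s := by
        rw [hMdef]; field_simp
      rw [eM1, eM2, sub_div] at *
      linarith
    -- pointwise event inclusion
    have hkey : ∀ x : Fin N → ℝ, (∀ i, x i = 0 ∨ x i = M) → (∃ i : Fin N, x i = M) →
        ε * sigmaES α (PIA.bm q M) ≤ |plugIn α N (pad N x) - ES α (PIA.bm q M)| := by
      rintro x hx ⟨i₀, hi₀⟩
      rw [hσ, mul_one, hES]
      have hy : ∀ i, pad N x i = 0 ∨ pad N x i = M := by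
        intro i; rw [pad]; split_ifs with h
        exacts [hx ⟨i, h⟩, Or.inl rfl]
      have hpad : pad N x i₀.1 = M := by
        rw [pad]; rw [dif_pos i₀.2]; simpa using hi₀
      have hpg := PIA.plugin_ge α hα0 (by linarith) hN0 hNinvα hM hy i₀.2 hpad
      have hd : ε ≤ plugIn α N (pad N x) - M * q / α := by linarith
      exact le_trans hd (le_abs_self _)
    set S : Set (Fin N → ℝ) := Set.pi Set.univ (fun _ => ({0, M} : Set ℝ)) with hS
    set T : Set (Fin N → ℝ) := Set.pi Set.univ (fun _ => ({0} : Set ℝ)) with hT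
    have hsub : S \ T ⊆
        {x | ε * sigmaES α (PIA.bm q M) ≤ |plugIn α N (pad N x) - ES α (PIA.bm q M)|} := by
      rintro x ⟨hxS, hxT⟩
      have hx : ∀ i, x i = 0 ∨ x i = M := fun i => by
        have := hxS i (Set.mem_univ i); simpa using this
      have hex : ∃ i, x i = M := by
        by_contra hno
        push_neg at hno
        refine hxT fun i _ => ?_
        rcases hx i with h | h
        · simpa using h
        · exact absurd h (hno i)
      exact hkey x hx hex
    haveI := PIA.bm_isProb q hq0.le hq1.le M
    have hμS : (Measure.pi fun _ : Fin N => PIA.bm q M) S = 1 := by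
      rw [hS, Measure.pi_pi]
      have hone : PIA.bm q M ({0, M} : Set ℝ) = 1 := by
        rw [PIA.bm_apply q M ((measurableSet_singleton M).insert 0),
          if_pos (show (0:ℝ) ∈ ({0, M} : Set ℝ) by simp),
          if_pos (show M ∈ ({0, M} : Set ℝ) by simp),
          ← ENNReal.ofReal_add (by linarith) hq0.le]
        norm_num
      simp [hone]
    have hμT : (Measure.pi fun _ : Fin N => PIA.bm q M) T = ENNReal.ofReal (1 - q) ^ N := by
      rw [hT, Measure.pi_pi]
      have h0 : PIA.bm q M ({0} : Set ℝ) = ENNReal.ofReal (1 - q) := by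
        rw [PIA.bm_apply q M (measurableSet_singleton 0),
          if_pos (show (0:ℝ) ∈ ({0} : Set ℝ) by simp),
          if_neg (by simpa using hM.ne'), add_zero]
      simp [h0, Finset.prod_const, Finset.card_univ]
    have hTsub : T ⊆ S := Set.pi_mono fun i _ => by simp
    have hTm : MeasurableSet T := MeasurableSet.univ_pi fun _ => measurableSet_singleton 0
    have hdiff : (Measure.pi fun _ : Fin N => PIA.bm q M) (S \ T)
        = 1 - ENNReal.ofReal (1 - q) ^ N := by
      rw [measure_diff hTsub hTm.nullMeasurableSet
        (by rw [hμT]; exact ENNReal.pow_ne_top ENNReal.ofReal_ne_top), hμS, hμT]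
    have hle1 : ENNReal.ofReal (1 - q) ^ N ≤ 1 :=
      pow_le_one' (ENNReal.ofReal_le_one.2 (by linarith)) N
    have htoReal : ((Measure.pi fun _ : Fin N => PIA.bm q M) (S \ T)).toReal
        = 1 - (1 - q) ^ N := by
      rw [hdiff, ENNReal.toReal_sub_of_le hle1 ENNReal.one_ne_top, ENNReal.toReal_one,
        ENNReal.toReal_pow, ENNReal.toReal_ofReal (by linarith)]
    have hNq : (N:ℝ) * q = 1 / (8 * (N:ℝ) * ε ^ 2) := by
      rw [hqdef]; field_simp
    have hNq1 : (N:ℝ) * q ≤ 1 := by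
      rw [hNq, div_le_one (by positivity)]; nlinarith
    have hpow : ((1:ℝ) - q) ^ N ≤ 1 / (1 + (N:ℝ) * q) := by
      have hb1 : (1:ℝ) + (N:ℝ) * q ≤ (1 + q) ^ N := one_add_mul_le_pow (by linarith) N
      have hb2 : (((1:ℝ) - q) * (1 + q)) ^ N ≤ 1 := by
        exact pow_le_one₀ (by nlinarith) (by nlinarith)
      rw [le_div_iff₀ (by positivity)]
      calc (1 - q) ^ N * (1 + (N:ℝ) * q)
          ≤ (1 - q) ^ N * (1 + q) ^ N :=
            mul_le_mul_of_nonneg_left hb1 (pow_nonneg (by linarith) N)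
        _ = ((1 - q) * (1 + q)) ^ N := (mul_pow _ _ _).symm
        _ ≤ 1 := hb2
    have h3' : (N:ℝ) * q / 2 ≤ 1 - 1 / (1 + (N:ℝ) * q) := by
      have e : 1 - 1 / (1 + (N:ℝ) * q) = ((N:ℝ) * q) / (1 + (N:ℝ) * q) := by
        field_simp
        ring
      rw [e]
      apply div_le_div_of_nonneg_left (by positivity) (by positivity) (by linarith)
    have hbound : 1 / (16 * (N:ℝ) * ε ^ 2) ≤ 1 - (1 - q) ^ N := by
      have e : (1:ℝ) / (16 * (N:ℝ) * ε ^ 2) = (N:ℝ) * q / 2 := by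
        rw [hNq]; ring
      rw [e]
      linarith
    calc (1:ℝ) / (16 * (N:ℝ) * ε ^ 2) ≤ 1 - (1 - q) ^ N := hbound
      _ = ((Measure.pi fun _ : Fin N => PIA.bm q M) (S \ T)).toReal := htoReal.symm
      _ ≤ _ := ENNReal.toReal_mono (measure_ne_top _ _) (measure_mono hsub)
end
end

section
/- Fix α ∈ (0,1/2), let ε ≤ (1/2)√α, and let R̂_N : ℝ^N → ℝ be an arbitrary measurable estimator. Then there exists a real-valued random variable X with σ_{ES_α(X)} = 1 and with F_X^{−1} 1-Lipschitz on [1−2α, 1−α/2], such that for i.i.d. copies X_1, …, X_N of X one has P(|R̂_N(X_1,…,X_N) − ES_α(X)| ≥ (1/10) ε σ_{ES_α(X)}) ≥ exp(−N ε²). -/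
open MeasureTheory ProbabilityTheory Set Filter Topology
open scoped ENNReal NNReal

noncomputable section

namespace NoEstAux

variable {p b α : ℝ}


def mu (p b : ℝ) : Measure ℝ :=
  ENNReal.ofReal p • Measure.dirac 0 + ENNReal.ofReal (1 - p) • Measure.dirac b

variable {p b : ℝ}

lemma mu_isProb (hp0 : 0 ≤ p) (hp1 : p ≤ 1) : IsProbabilityMeasure (mu p b) := by
  constructor
  simp only [mu, Measure.add_apply, Measure.smul_apply, smul_eq_mul, measure_univ, mul_one]
  rw [← ENNReal.ofReal_add hp0 (by linarith)]
  norm_num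

lemma cdf_eq (hp0 : 0 ≤ p) (hp1 : p ≤ 1) (t : ℝ) :
    distCdf (mu p b) t = (if 0 ≤ t then p else 0) + (if b ≤ t then 1 - p else 0) := by
  unfold distCdf mu
  rw [Measure.add_apply, Measure.smul_apply, Measure.smul_apply,
    Measure.dirac_apply' _ measurableSet_Iic, Measure.dirac_apply' _ measurableSet_Iic]
  simp only [Set.indicator_apply, Set.mem_Iic, Pi.one_apply, smul_eq_mul, mul_ite, mul_one, mul_zero]
  have h1p : (0:ℝ) ≤ 1 - p := by linarith
  split_ifs with h1 h2 h2 <;>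
    simp [ENNReal.toReal_add, ENNReal.ofReal_ne_top, ENNReal.toReal_ofReal, hp0, h1p]

lemma mu_zero (hb : b ≠ 0) : mu p b ({0} : Set ℝ) = ENNReal.ofReal p := by
  rw [mu, Measure.add_apply, Measure.smul_apply, Measure.smul_apply,
    Measure.dirac_apply' _ (measurableSet_singleton 0),
    Measure.dirac_apply' _ (measurableSet_singleton 0)]
  simp [Set.indicator_apply, hb]


lemma var_le (hb : 0 < b) (hp0 : 0 ≤ p) (hp1 : p ≤ 1) {u : ℝ} (hu0 : 0 < u) (hup : u ≤ p) :
    VaR (mu p b) u = 0 := by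
  unfold VaR
  have hset : {t : ℝ | u ≤ distCdf (mu p b) t} = Set.Ici 0 := by
    ext t
    rw [Set.mem_setOf_eq, cdf_eq hp0 hp1, Set.mem_Ici]
    constructor
    · intro h
      by_contra ht
      push_neg at ht
      rw [if_neg (not_le.2 ht), if_neg (by linarith)] at h
      linarith
    · intro ht
      rw [if_pos ht]
      split_ifs with h2 <;> linarith
  rw [hset, csInf_Ici]

lemma var_gt (hb : 0 < b) (hp0 : 0 ≤ p) (hp1 : p ≤ 1) {u : ℝ} (hup : p < u) (hu1 : u ≤ 1) :
    VaR (mu p b) u = b := by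
  unfold VaR
  have hset : {t : ℝ | u ≤ distCdf (mu p b) t} = Set.Ici b := by
    ext t
    rw [Set.mem_setOf_eq, cdf_eq hp0 hp1, Set.mem_Ici]
    constructor
    · intro h
      by_contra ht
      push_neg at ht
      rw [if_neg (not_le.2 ht)] at h
      split_ifs at h <;> linarith
    · intro ht
      rw [if_pos (le_trans hb.le ht), if_pos ht]
      linarith
  rw [hset, csInf_Ici]

lemma es_eq (hα0 : 0 < α) (hα2 : α < 1/2) (hb : 0 < b) (hp1 : p ≤ 1) (hpl : 1 - α ≤ p) :
    ES α (mu p b) = (1/α) * ((1 - p) * b) := by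
  have hp0 : 0 ≤ p := by linarith
  unfold ES
  congr 1
  rw [setIntegral_congr_fun (g := fun u => (Set.Ioi p).indicator (fun _ => b) u)
      measurableSet_Ioo ?_]
  · rw [setIntegral_indicator measurableSet_Ioi]
    have hinter : Set.Ioo (1-α) 1 ∩ Set.Ioi p = Set.Ioo p 1 := by
      ext u
      simp only [Set.mem_inter_iff, Set.mem_Ioo, Set.mem_Ioi]
      constructor
      · rintro ⟨⟨_, h1⟩, h2⟩; exact ⟨h2, h1⟩
      · rintro ⟨h1, h2⟩; exact ⟨⟨by linarith, h2⟩, h1⟩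
    rw [hinter, setIntegral_const, measureReal_def, Real.volume_Ioo, smul_eq_mul,
      ENNReal.toReal_ofReal (by linarith)]
  · intro u hu
    obtain ⟨hu1, hu2⟩ := hu
    by_cases hup : u ≤ p
    · rw [var_le hb hp0 hp1 (by linarith) hup]
      simp only []
      rw [Set.indicator_of_notMem (by simpa using hup)]
    · push_neg at hup
      rw [var_gt hb hp0 hp1 hup hu2.le]
      simp only []
      rw [Set.indicator_of_mem (by simpa using hup)]


lemma cdf_mid (hp0 : 0 ≤ p) (hp1 : p ≤ 1) {t : ℝ} (h0 : 0 ≤ t) (hb : t < b) :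
    distCdf (mu p b) t = p := by
  rw [cdf_eq hp0 hp1, if_pos h0, if_neg (not_le.2 hb), add_zero]

lemma cdf_top (hb : 0 < b) (hp0 : 0 ≤ p) (hp1 : p ≤ 1) {t : ℝ} (h : b ≤ t) :
    distCdf (mu p b) t = 1 := by
  rw [cdf_eq hp0 hp1, if_pos (le_trans hb.le h), if_pos h]; ring

lemma inner_integral (hb : 0 < b) (hp0 : 0 ≤ p) (hp1 : p ≤ 1) {t : ℝ} (ht : t ∈ Set.Ioi (0:ℝ)) :
    (∫⁻ s in Set.Ioi (0:ℝ), ENNReal.ofReal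
        (distCdf (mu p b) (min t s) - distCdf (mu p b) t * distCdf (mu p b) s))
      = (Set.Ioo (0:ℝ) b).indicator
          (fun _ => ENNReal.ofReal (p*(1-p)) * ENNReal.ofReal b) t := by
  rw [Set.mem_Ioi] at ht
  by_cases htb : t < b
  · rw [Set.indicator_of_mem (Set.mem_Ioo.mpr ⟨ht, htb⟩)]
    have hcongr : ∀ s ∈ Set.Ioi (0:ℝ),
        ENNReal.ofReal (distCdf (mu p b) (min t s) - distCdf (mu p b) t * distCdf (mu p b) s)
        = (Set.Ioo (0:ℝ) b).indicator (fun _ => ENNReal.ofReal (p*(1-p))) s := by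
      intro s hs
      rw [Set.mem_Ioi] at hs
      by_cases hsb : s < b
      · rw [Set.indicator_of_mem (Set.mem_Ioo.mpr ⟨hs, hsb⟩),
          cdf_mid hp0 hp1 (le_min ht.le hs.le) (lt_of_le_of_lt (min_le_left _ _) htb),
          cdf_mid hp0 hp1 ht.le htb, cdf_mid hp0 hp1 hs.le hsb]
        ring_nf
      · push_neg at hsb
        rw [Set.indicator_of_notMem (fun h => absurd h.2 (not_lt.2 hsb)),
          min_eq_left (le_trans htb.le hsb),
          cdf_mid hp0 hp1 ht.le htb, cdf_top hb hp0 hp1 hsb]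
        simp
    rw [setLIntegral_congr_fun measurableSet_Ioi hcongr,
      lintegral_indicator measurableSet_Ioo, setLIntegral_const,
      Measure.restrict_apply measurableSet_Ioo,
      Set.inter_eq_self_of_subset_left (fun x hx => hx.1), Real.volume_Ioo, sub_zero]
  · push_neg at htb
    rw [Set.indicator_of_notMem (fun h => absurd h.2 (not_lt.2 htb))]
    have hcongr : ∀ s ∈ Set.Ioi (0:ℝ),
        ENNReal.ofReal (distCdf (mu p b) (min t s) - distCdf (mu p b) t * distCdf (mu p b) s)
        = (0 : ℝ≥0∞) := by
      intro s hs
      rw [Set.mem_Ioi] at hs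
      by_cases hsb : s < b
      · rw [min_eq_right (le_trans hsb.le htb), cdf_mid hp0 hp1 hs.le hsb,
          cdf_top hb hp0 hp1 htb]
        simp
      · push_neg at hsb
        rw [cdf_top hb hp0 hp1 htb, cdf_top hb hp0 hp1 hsb,
          cdf_top hb hp0 hp1 (le_min htb hsb)]
        simp
    rw [setLIntegral_congr_fun measurableSet_Ioi hcongr,
      lintegral_zero]

lemma sigma_eq (hα0 : 0 < α) (hα2 : α < 1/2) (hb : 0 < b) (hp0 : 0 ≤ p) (hp1 : p ≤ 1)
    (hpl : 1 - α ≤ p) :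
    sigmaSq α (mu p b) = ENNReal.ofReal (1/α^2 * (p * (1-p)) * (b * b)) := by
  unfold sigmaSq
  rw [var_le hb hp0 hp1 (by linarith) hpl]
  rw [setLIntegral_congr_fun measurableSet_Ioi
      (fun t ht => inner_integral hb hp0 hp1 ht),
    lintegral_indicator measurableSet_Ioo, setLIntegral_const,
    Measure.restrict_apply measurableSet_Ioo,
    Set.inter_eq_self_of_subset_left (fun x hx => hx.1), Real.volume_Ioo, sub_zero]
  have hpp : (0:ℝ) ≤ p * (1 - p) := by nlinarith
  rw [← ENNReal.ofReal_mul hpp, ← ENNReal.ofReal_mul (by positivity),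
    ← ENNReal.ofReal_mul (by positivity)]
  congr 1
  ring


end NoEstAux

/-- **No estimator can outperform the CLT rate.** For any measurable estimator
`R̂_N : ℝ^N → ℝ` and any `ε ≤ √α/2`, there is a distribution with `σ_{ES_α} = 1` and
`1`-Lipschitz quantile function on `[1-2α, 1-α/2]` such that
`P(|R̂_N(X_1,…,X_N) - ES_α(X)| ≥ (1/10) ε σ_{ES_α(X)}) ≥ exp(-N ε²)`. -/
theorem no_estimator_beats_clt
    (α ε : ℝ) (hα : α ∈ Set.Ioo (0 : ℝ) (1 / 2)) (hε : 0 < ε) (hεα : ε ≤ Real.sqrt α / 2)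
    (N : ℕ) (R : (Fin N → ℝ) → ℝ) (hR : Measurable R) :
    ∃ μ : Measure ℝ, IsProbabilityMeasure μ ∧
      sigmaES α μ = 1 ∧
      LipschitzOnWith 1 (fun u => VaR μ u) (Set.Icc (1 - 2 * α) (1 - α / 2)) ∧
      Real.exp (-(N * ε ^ 2)) ≤
        ((Measure.pi fun _ : Fin N => μ)
          {x | (1 / 10) * ε * sigmaES α μ ≤ |R x - ES α μ|}).toReal := by
  obtain ⟨hα0, hα2⟩ := hα
  have hε2 : ε^2 ≤ α/4 := by
    have h1 : Real.sqrt α ^ 2 = α := Real.sq_sqrt hα0.le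
    nlinarith [Real.sqrt_nonneg α]
  -- the threshold p₀
  set p₀ : ℝ := max (Real.exp (-ε^2)) (1 - α/2) with hp₀def
  clear_value p₀
  have hp₀pos : 0 < p₀ := by rw [hp₀def]; exact lt_max_of_lt_left (Real.exp_pos _)
  have hp₀lt1 : p₀ < 1 := by
    rw [hp₀def]
    apply max_lt
    · rw [Real.exp_lt_one_iff]; nlinarith
    · linarith
  have hp₀le : p₀ ≤ 1/(1+ε^2) := by
    have h1 : (0:ℝ) < 1 + ε^2 := by positivity
    rw [hp₀def]
    apply max_le
    · rw [le_div_iff₀ h1]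
      have := Real.add_one_le_exp (ε^2)
      calc Real.exp (-ε^2) * (1 + ε^2) ≤ Real.exp (-ε^2) * Real.exp (ε^2) := by
            nlinarith [Real.exp_pos (-ε^2)]
        _ = 1 := by rw [← Real.exp_add]; simp
    · rw [le_div_iff₀ h1]; nlinarith
  -- Y : the max attainable ES value
  set Y : ℝ := Real.sqrt (1/p₀ - 1) with hYdef
  clear_value Y
  have hp₀inv : 1 + ε^2 ≤ 1/p₀ := by
    have h2 : p₀ * (1+ε^2) ≤ 1 := by
      rw [← le_div_iff₀ (by positivity : (0:ℝ) < 1+ε^2)]; exact hp₀le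
    rw [le_div_iff₀ hp₀pos]; linarith
  have hYsq : Y^2 = 1/p₀ - 1 := by rw [hYdef]; exact Real.sq_sqrt (by nlinarith)
  have hYε : ε ≤ Y := by
    rw [hYdef]
    rw [show ε = Real.sqrt (ε^2) from (Real.sqrt_sq hε.le).symm]
    exact Real.sqrt_le_sqrt (by linarith)
  have hY0 : 0 < Y := lt_of_lt_of_le hε hYε
  -- the choice of the target ES value y
  set r₀ : ℝ := R (fun _ => 0) with hr₀def
  clear_value r₀
  set y : ℝ := if ε/10 ≤ |r₀ - Y| then Y else Y/2 with hydef
  clear_value y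
  have hy0 : 0 < y := by rw [hydef]; split_ifs <;> linarith
  have hyY : y ≤ Y := by rw [hydef]; split_ifs <;> linarith
  have hygap : ε/10 ≤ |r₀ - y| := by
    rw [hydef]
    split_ifs with h
    · exact h
    · push_neg at h
      have h1 : |Y/2| - |Y/2 - (r₀ - Y/2)| ≤ |r₀ - Y/2| := by
        have := abs_sub_abs_le_abs_sub (Y/2) (Y/2 - (r₀ - Y/2))
        simpa using this
      have h2 : Y/2 - (r₀ - Y/2) = Y - r₀ := by ring
      rw [h2, abs_sub_comm Y r₀, abs_of_pos (by linarith : (0:ℝ) < Y/2)] at h1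
      linarith
  -- the parameters of the distribution
  set p : ℝ := 1/(1+y^2) with hpdef
  clear_value p
  have h1y : (0:ℝ) < 1 + y^2 := by positivity
  have hp0 : 0 < p := by rw [hpdef]; positivity
  have hp1 : p < 1 := by
    rw [hpdef, div_lt_one h1y]; nlinarith
  have hpp₀ : p₀ ≤ p := by
    have h1 : 1/(1+Y^2) = p₀ := by
      rw [hYsq]
      field_simp
      ring
    rw [hpdef, ← h1]
    apply one_div_le_one_div_of_le (by positivity)
    nlinarith
  have hpα : 1 - α/2 ≤ p := le_trans (by rw [hp₀def]; exact le_max_right _ _) hpp₀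
  have hpexp : Real.exp (-ε^2) ≤ p := le_trans (by rw [hp₀def]; exact le_max_left _ _) hpp₀
  have hplα : 1 - α ≤ p := by linarith
  have h1p : 1 - p = y^2 * p := by
    rw [hpdef]; field_simp; ring
  -- the scale b
  set s : ℝ := Real.sqrt (p * (1 - p)) with hsdef
  clear_value s
  have hspos : 0 < s := by rw [hsdef]; exact Real.sqrt_pos.2 (mul_pos hp0 (by linarith))
  have hs_eq : s = y * p := by
    rw [hsdef, show p * (1 - p) = (y * p)^2 by rw [h1p]; ring,
      Real.sqrt_sq (by positivity)]
  set b : ℝ := α / s with hbdef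
  clear_value b
  have hb : 0 < b := by rw [hbdef]; positivity
  have hbsq : p * (1 - p) * (b * b) = α^2 := by
    have hs2 : s^2 = p * (1 - p) := by
      rw [hsdef]; exact Real.sq_sqrt (mul_nonneg hp0.le (by linarith))
    rw [hbdef, ← hs2]
    field_simp
  have hαne : α ≠ 0 := hα0.ne'
  have hyne : y ≠ 0 := hy0.ne'
  have hpne : p ≠ 0 := hp0.ne'
  have hσES : sigmaES α (NoEstAux.mu p b) = 1 := by
    have hσ : sigmaSq α (NoEstAux.mu p b) = 1 := by
      rw [NoEstAux.sigma_eq hα0 hα2 hb hp0.le hp1.le hplα]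
      have hval : 1/α^2 * (p * (1-p)) * (b * b) = 1 := by
        field_simp
        linarith [hbsq]
      rw [hval, ENNReal.ofReal_one]
    rw [sigmaES, hσ]
    simp
  have hES : ES α (NoEstAux.mu p b) = y := by
    rw [NoEstAux.es_eq hα0 hα2 hb hp1.le hplα, h1p, hbdef, hs_eq]
    field_simp
  refine ⟨NoEstAux.mu p b, NoEstAux.mu_isProb hp0.le hp1.le, hσES, ?_, ?_⟩
  · -- Lipschitz: VaR is constant 0 on the interval
    intro u hu v hv
    rw [Set.mem_Icc] at hu hv
    have h2α : (0:ℝ) < 1 - 2*α := by linarith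
    simp only
    rw [NoEstAux.var_le hb hp0.le hp1.le (by linarith [hu.1]) (by linarith [hu.2]),
      NoEstAux.var_le hb hp0.le hp1.le (by linarith [hv.1]) (by linarith [hv.2]),
      edist_self]
    exact zero_le
  · -- probability bound
    haveI hprob : IsProbabilityMeasure (NoEstAux.mu p b) := NoEstAux.mu_isProb hp0.le hp1.le
    have hsub : ({fun _ => (0:ℝ)} : Set (Fin N → ℝ)) ⊆
        {x | 1/10 * ε * sigmaES α (NoEstAux.mu p b) ≤ |R x - ES α (NoEstAux.mu p b)|} := by
      intro x hx
      rw [Set.mem_singleton_iff] at hx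
      subst hx
      rw [Set.mem_setOf_eq, hσES, hES, mul_one, ← hr₀def]
      linarith [hygap]
    have hsing : (Measure.pi fun _ : Fin N => NoEstAux.mu p b) {fun _ => (0:ℝ)}
        = ENNReal.ofReal p ^ N := by
      have h1 : ({fun _ => (0:ℝ)} : Set (Fin N → ℝ))
          = Set.pi Set.univ (fun _ => ({0} : Set ℝ)) := by
        ext x
        simp [funext_iff, Set.mem_pi]
      rw [h1, Measure.pi_pi]
      simp [NoEstAux.mu_zero hb.ne']
    have hle : ENNReal.ofReal (Real.exp (-(N*ε^2)))
        ≤ (Measure.pi fun _ : Fin N => NoEstAux.mu p b)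
            {x | 1/10 * ε * sigmaES α (NoEstAux.mu p b) ≤ |R x - ES α (NoEstAux.mu p b)|} := by
      calc ENNReal.ofReal (Real.exp (-(N*ε^2)))
          = ENNReal.ofReal (Real.exp (-ε^2) ^ N) := by
            rw [show -((N:ℝ)*ε^2) = (N:ℝ) * (-ε^2) by ring, Real.exp_nat_mul]
        _ ≤ ENNReal.ofReal (p ^ N) :=
            ENNReal.ofReal_le_ofReal (pow_le_pow_left₀ (Real.exp_pos _).le hpexp N)
        _ = ENNReal.ofReal p ^ N := ENNReal.ofReal_pow hp0.le N
        _ = _ := hsing.symm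
        _ ≤ _ := measure_mono hsub
    calc Real.exp (-(N*ε^2)) = (ENNReal.ofReal (Real.exp (-(N*ε^2)))).toReal :=
          (ENNReal.toReal_ofReal (Real.exp_pos _).le).symm
      _ ≤ _ := ENNReal.toReal_mono (measure_ne_top _ _) hle
end
end

section
/- Fix α ∈ (0,1/2) with α ≤ 1/2. Assume X has a Pareto distribution with parameters λ > 2 and x₀ > 0, and set r := (λ+1)/λ. Then: (i) F_X^{−1} is Lipschitz continuous on [1−2α, 1−α/2] with Lipschitz constant L = x₀ 2^r / (λ α^r); and (ii) the variance satisfies the two-sided bound x₀² α^{1−2r} / (2 λ² (3−2r)) ≤ σ²_{ES_α(X)} ≤ 2 x₀² α^{1−2r} / (λ² (r−1)(3−2r)). -/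
open MeasureTheory ProbabilityTheory Set Filter Topology
open scoped ENNReal NNReal

noncomputable section

private lemma var_formula {lam x₀ : ℝ} (hlam : 0 < lam) (hx₀ : 0 < x₀)
    (μ : Measure ℝ)
    (hPareto : ∀ t : ℝ, distCdf μ t = if t < x₀ then 0 else 1 - (x₀ / t) ^ lam)
    {u : ℝ} (hu0 : 0 < u) (hu1 : u < 1) :
    VaR μ u = x₀ * (1 - u) ^ (-(1/lam)) := by
  have h1u : 0 < 1 - u := by linarith
  set g := x₀ * (1 - u) ^ (-(1/lam)) with hg
  have hge1 : (1:ℝ) ≤ (1 - u) ^ (-(1/lam)) :=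
    Real.one_le_rpow_of_pos_of_le_one_of_nonpos h1u (by linarith)
      (by simp [le_of_lt, hlam, one_div_pos.mpr hlam])
  have hgx₀ : x₀ ≤ g := by nlinarith
  have hgpos : 0 < g := lt_of_lt_of_le hx₀ hgx₀
  have hkey : x₀ / g = (1 - u) ^ (1/lam) := by
    rw [hg, Real.rpow_neg h1u.le]
    field_simp
  have hset : {t : ℝ | u ≤ distCdf μ t} = Ici g := by
    ext t
    simp only [mem_setOf_eq, mem_Ici, hPareto]
    constructor
    · intro h
      rcases lt_or_ge t x₀ with htx | htx
      · rw [if_pos htx] at h; linarith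
      · rw [if_neg (not_lt.mpr htx)] at h
        have ht0 : 0 < t := lt_of_lt_of_le hx₀ htx
        have h2 : (x₀/t) ^ lam ≤ 1 - u := by linarith
        have h3 : ((x₀/t) ^ lam) ^ (1/lam) ≤ (1-u) ^ (1/lam) :=
          Real.rpow_le_rpow (Real.rpow_nonneg (by positivity) _) h2 (by positivity)
        rw [← Real.rpow_mul (by positivity), mul_one_div_cancel hlam.ne', Real.rpow_one] at h3
        rw [← hkey] at h3
        rw [div_le_div_iff₀ ht0 hgpos] at h3
        nlinarith
    · intro h
      rw [if_neg (not_lt.mpr (le_trans hgx₀ h))]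
      have ht0 : 0 < t := lt_of_lt_of_le hgpos h
      have h1 : x₀ / t ≤ x₀ / g := div_le_div_of_nonneg_left hx₀.le hgpos h
      have h2 : (x₀/t) ^ lam ≤ (x₀/g) ^ lam :=
        Real.rpow_le_rpow (by positivity) h1 hlam.le
      rw [hkey, ← Real.rpow_mul h1u.le, one_div_mul_cancel hlam.ne', Real.rpow_one] at h2
      linarith
  rw [VaR, hset, csInf_Ici]

private lemma lip_part {α lam x₀ : ℝ} (hα : 0 < α) (hα2 : α < 1/2) (hlam : 2 < lam) (hx₀ : 0 < x₀)
    (μ : Measure ℝ)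
    (hPareto : ∀ t : ℝ, distCdf μ t = if t < x₀ then 0 else 1 - (x₀ / t) ^ lam)
    (r : ℝ) (hr : r = (lam + 1) / lam) :
    LipschitzOnWith (Real.toNNReal (x₀ * 2 ^ r / (lam * α ^ r))) (fun u => VaR μ u)
      (Set.Icc (1 - 2 * α) (1 - α / 2)) := by
  have hlam0 : (0:ℝ) < lam := by linarith
  have hrpos : 0 < r := by rw [hr]; positivity
  set L := x₀ * 2 ^ r / (lam * α ^ r) with hL
  have hLpos : 0 < L := by rw [hL]; positivity
  have hmem : ∀ u ∈ Set.Icc (1 - 2*α) (1 - α/2), 0 < u ∧ u < 1 ∧ α/2 ≤ 1 - u ∧ 1 - u ≤ 2*α := by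
    intro u hu
    obtain ⟨h1, h2⟩ := hu
    exact ⟨by linarith, by linarith, by linarith, by linarith⟩
  have hexp : -(1/lam) - 1 = -r := by rw [hr]; field_simp; ring
  have hL2 : LipschitzOnWith (Real.toNNReal L)
      (fun u => x₀ * (1 - u) ^ (-(1/lam))) (Set.Icc (1 - 2*α) (1 - α/2)) := by
    apply Convex.lipschitzOnWith_of_nnnorm_hasDerivWithin_le
      (f' := fun u => x₀ * ((1/lam) * (1 - u) ^ (-r))) (convex_Icc _ _)
    · intro u hu
      obtain ⟨hu0, hu1, hlo, hhi⟩ := hmem u hu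
      have h1u : 0 < 1 - u := by linarith [hα]
      have hd : HasDerivAt (fun u : ℝ => x₀ * (1 - u) ^ (-(1/lam)))
          (x₀ * ((0 - 1) * (-(1/lam)) * (1 - u) ^ (-(1/lam) - 1))) u :=
        (((hasDerivAt_const u (1:ℝ)).sub (hasDerivAt_id u)).rpow_const
          (Or.inl h1u.ne')).const_mul x₀
      rw [hexp] at hd
      have : x₀ * ((0 - 1) * (-(1/lam)) * (1 - u) ^ (-r)) = x₀ * ((1/lam) * (1 - u) ^ (-r)) := by
        ring
      rw [this] at hd
      exact hd.hasDerivWithinAt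
    · intro u hu
      obtain ⟨hu0, hu1, hlo, hhi⟩ := hmem u hu
      have h1u : 0 < 1 - u := by linarith [hα]
      have hnn : 0 ≤ x₀ * ((1/lam) * (1 - u) ^ (-r)) := by
        have := Real.rpow_nonneg h1u.le (-r)
        positivity
      rw [← NNReal.coe_le_coe, coe_nnnorm, Real.coe_toNNReal _ hLpos.le,
        Real.norm_eq_abs, abs_of_nonneg hnn]
      have hb : (1 - u) ^ (-r) ≤ (α/2) ^ (-r) :=
        Real.rpow_le_rpow_of_nonpos (by positivity) hlo (by linarith)
      have heq : (α/2) ^ (-r) = 2 ^ r / α ^ r := by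
        rw [Real.rpow_neg (by positivity), Real.div_rpow hα.le (by norm_num), inv_div]
      calc x₀ * ((1/lam) * (1 - u) ^ (-r)) ≤ x₀ * ((1/lam) * ((α/2) ^ (-r))) := by gcongr
        _ = L := by rw [heq, hL]; ring
  rw [lipschitzOnWith_iff_dist_le_mul] at hL2 ⊢
  intro x hx y hy
  obtain ⟨hx0, hx1, _, _⟩ := hmem x hx
  obtain ⟨hy0, hy1, _, _⟩ := hmem y hy
  rw [var_formula hlam0 hx₀ μ hPareto hx0 hx1, var_formula hlam0 hx₀ μ hPareto hy0 hy1]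
  exact hL2 x hx y hy

private lemma lint_rpow {c p : ℝ} (hp : p < -1) (hc : 0 < c) :
    ∫⁻ s in Set.Ioi c, ENNReal.ofReal (s ^ p) = ENNReal.ofReal (c ^ (p+1) / (-(p+1))) := by
  rw [← ofReal_integral_eq_lintegral_ofReal (integrableOn_Ioi_rpow_of_lt hp hc)
      ((ae_restrict_iff' measurableSet_Ioi).mpr (ae_of_all _ fun s hs =>
        Real.rpow_nonneg (le_of_lt (hc.trans hs)) p)),
    integral_Ioi_rpow_of_lt hp hc, div_neg, neg_div]

private lemma div_rpow_eq {x₀ : ℝ} (hx₀ : 0 < x₀) {t : ℝ} (ht : 0 < t) (lam : ℝ) :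
    (x₀ / t) ^ lam = x₀ ^ lam * t ^ (-lam) := by
  rw [Real.div_rpow hx₀.le ht.le, Real.rpow_neg ht.le, div_eq_mul_inv]

private lemma inner_min {lam x₀ q : ℝ} (hlam : 2 < lam) (hx₀ : 0 < x₀) (hq : 0 < q)
    {t : ℝ} (ht : q < t) :
    ∫⁻ s in Set.Ioi q, ENNReal.ofReal (min ((x₀/t)^lam) ((x₀/s)^lam))
      = ENNReal.ofReal (x₀^lam * (t^(-lam) * (t - q) + t^(1-lam) / (lam - 1))) := by
  have ht0 : 0 < t := hq.trans ht
  have hanti : ∀ a b : ℝ, 0 < a → a ≤ b → (x₀/b)^lam ≤ (x₀/a)^lam := fun a b ha hab =>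
    Real.rpow_le_rpow (div_nonneg hx₀.le (ha.trans_le hab).le) (div_le_div_of_nonneg_left hx₀.le ha hab) (by linarith)
  rw [← Ioc_union_Ioi_eq_Ioi ht.le, lintegral_union measurableSet_Ioi (Ioc_disjoint_Ioi le_rfl)]
  have h1 : ∫⁻ s in Set.Ioc q t, ENNReal.ofReal (min ((x₀/t)^lam) ((x₀/s)^lam))
      = ENNReal.ofReal ((x₀/t)^lam * (t - q)) := by
    rw [setLIntegral_congr_fun measurableSet_Ioc (fun s hs => by
      rw [min_eq_left (hanti s t (hq.trans hs.1) hs.2)]), setLIntegral_const,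
      Real.volume_Ioc, ← ENNReal.ofReal_mul (by positivity)]
  have h2 : ∫⁻ s in Set.Ioi t, ENNReal.ofReal (min ((x₀/t)^lam) ((x₀/s)^lam))
      = ENNReal.ofReal (x₀^lam * (t^(1-lam) / (lam - 1))) := by
    rw [setLIntegral_congr_fun measurableSet_Ioi (fun s hs => by
      rw [min_eq_right (hanti t s ht0 hs.le), div_rpow_eq hx₀ (ht0.trans hs) lam,
        ENNReal.ofReal_mul (by positivity)]),
      lintegral_const_mul' _ _ ENNReal.ofReal_ne_top,
      lint_rpow (by linarith : -lam < -1) ht0,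
      ← ENNReal.ofReal_mul (by positivity)]
    congr 2
    rw [show -lam + 1 = 1 - lam by ring]
    ring
  rw [h1, h2, ← ENNReal.ofReal_add (mul_nonneg (Real.rpow_nonneg (by positivity) _) (by linarith)) (mul_nonneg (Real.rpow_nonneg hx₀.le _) (div_nonneg (Real.rpow_nonneg ht0.le _) (by linarith)))]
  congr 1
  rw [div_rpow_eq hx₀ ht0 lam]
  ring

private lemma K_eq {lam x₀ q : ℝ} (hlam : 2 < lam) (hx₀ : 0 < x₀) (hq : 0 < q) :
    ∫⁻ t in Set.Ioi q, ∫⁻ s in Set.Ioi q, ENNReal.ofReal (min ((x₀/t)^lam) ((x₀/s)^lam))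
      = ENNReal.ofReal (2 * x₀^lam * q^(2-lam) / ((lam-1)*(lam-2))) := by
  have h1 : (1:ℝ) - lam < -1 := by linarith
  have h2 : -lam < -1 := by linarith
  have hl1 : lam - 1 ≠ 0 := by intro h; nlinarith
  have hl2 : lam - 2 ≠ 0 := by intro h; nlinarith
  rw [setLIntegral_congr_fun measurableSet_Ioi
    (fun t ht => inner_min hlam hx₀ hq ht)]
  have heqon : EqOn (fun t : ℝ => x₀^lam * (lam/(lam-1)) * t^(1-lam) - x₀^lam * q * t^(-lam))
      (fun t : ℝ => x₀^lam * (t^(-lam) * (t - q) + t^(1-lam) / (lam - 1))) (Set.Ioi q) := by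
    intro t ht
    have ht0 : (0:ℝ) < t := hq.trans ht
    have : t^(-lam) * t = t^(1-lam) := by
      rw [show (1:ℝ) - lam = -lam + 1 by ring, Real.rpow_add_one ht0.ne']
    simp only
    field_simp
    linear_combination (-(lam - 1)) * this
  have hint1 : IntegrableOn (fun t : ℝ => x₀^lam * (lam/(lam-1)) * t^(1-lam)) (Set.Ioi q) :=
    (integrableOn_Ioi_rpow_of_lt h1 hq).const_mul _
  have hint2 : IntegrableOn (fun t : ℝ => x₀^lam * q * t^(-lam)) (Set.Ioi q) :=
    (integrableOn_Ioi_rpow_of_lt h2 hq).const_mul _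
  have hint : IntegrableOn (fun t : ℝ => x₀^lam * (t^(-lam) * (t - q) + t^(1-lam) / (lam - 1)))
      (Set.Ioi q) := IntegrableOn.congr_fun (hint1.sub hint2) heqon measurableSet_Ioi
  have hnn : 0 ≤ᵐ[volume.restrict (Set.Ioi q)]
      (fun t : ℝ => x₀^lam * (t^(-lam) * (t - q) + t^(1-lam) / (lam - 1))) := by
    refine (ae_restrict_iff' measurableSet_Ioi).mpr (ae_of_all _ fun t ht => ?_)
    have ht0 : (0:ℝ) < t := hq.trans ht
    have h3 : (0:ℝ) ≤ t - q := by simp at ht; linarith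
    have h4 : (0:ℝ) < lam - 1 := by linarith
    positivity
  rw [← ofReal_integral_eq_lintegral_ofReal hint hnn]
  congr 1
  rw [← setIntegral_congr_fun measurableSet_Ioi heqon,
    integral_sub hint1 hint2, integral_const_mul, integral_const_mul,
    integral_Ioi_rpow_of_lt h1 hq, integral_Ioi_rpow_of_lt h2 hq]
  have e1 : (1:ℝ) - lam + 1 = 2 - lam := by ring
  have e2 : -lam + 1 = 1 - lam := by ring
  rw [e1, e2]
  have e3 : q * q^(1-lam) = q^(2-lam) := by
    rw [show (2:ℝ) - lam = (1 - lam) + 1 by ring, Real.rpow_add_one hq.ne']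
    ring
  have hl1' : (1:ℝ) - lam ≠ 0 := by intro h; nlinarith
  have hl2' : (2:ℝ) - lam ≠ 0 := by intro h; nlinarith
  field_simp
  linear_combination (-((lam - 1) * (lam - 2) ^ 2)) * e3

private lemma cdf_min_identity {lam x₀ q : ℝ} (hlam : 0 ≤ lam) (hx₀ : 0 < x₀) (hq : x₀ ≤ q)
    (μ : Measure ℝ)
    (hPareto : ∀ t : ℝ, distCdf μ t = if t < x₀ then 0 else 1 - (x₀ / t) ^ lam)
    {t s : ℝ} (ht : q < t) (hs : q < s) :
    distCdf μ (min t s) - distCdf μ t * distCdf μ s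
      = min ((x₀/t)^lam) ((x₀/s)^lam) - (x₀/t)^lam * ((x₀/s)^lam) := by
  have hxt : x₀ ≤ t := hq.trans ht.le
  have hxs : x₀ ≤ s := hq.trans hs.le
  have hanti : ∀ a b : ℝ, 0 < a → a ≤ b → (x₀/b)^lam ≤ (x₀/a)^lam := fun a b ha hab =>
    Real.rpow_le_rpow (div_nonneg hx₀.le (ha.trans_le hab).le)
      (div_le_div_of_nonneg_left hx₀.le ha hab) hlam
  rcases le_total t s with h | h
  · rw [min_eq_left h, min_eq_right (hanti t s (hx₀.trans_le hxt) h),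
      hPareto t, hPareto s, if_neg (not_lt.mpr hxt), if_neg (not_lt.mpr hxs)]
    ring
  · rw [min_eq_right h, min_eq_left (hanti s t (hx₀.trans_le hxs) h),
      hPareto t, hPareto s, if_neg (not_lt.mpr hxt), if_neg (not_lt.mpr hxs)]
    ring

private lemma min_prod_bounds {a b : ℝ} (ha : 0 ≤ a) (ha2 : a ≤ 1/2) (hb : 0 ≤ b) (hb2 : b ≤ 1/2) :
    min a b ≤ 2 * (min a b - a * b) ∧ min a b - a * b ≤ min a b := by
  rcases le_total a b with h | h
  · rw [min_eq_left h]; constructor <;> nlinarith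
  · rw [min_eq_right h]; constructor <;> nlinarith

private lemma A_le {lam x₀ α : ℝ} (hlam : 0 < lam) (hx₀ : 0 < x₀) (hα : 0 < α) (hα1 : α ≤ 1)
    {t : ℝ} (ht : x₀ * α^(-(1/lam)) < t) : (x₀/t)^lam ≤ α := by
  have hqpos : (0:ℝ) < x₀ * α^(-(1/lam)) := by positivity
  have ht0 : 0 < t := hqpos.trans ht
  have hkey : x₀ / (x₀ * α^(-(1/lam))) = α^(1/lam) := by
    rw [Real.rpow_neg hα.le]; field_simp
  have h1 : x₀/t ≤ x₀/(x₀ * α^(-(1/lam))) := div_le_div_of_nonneg_left hx₀.le hqpos ht.le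
  have h2 : (x₀/t)^lam ≤ (x₀/(x₀ * α^(-(1/lam))))^lam :=
    Real.rpow_le_rpow (by positivity) h1 hlam.le
  rwa [hkey, ← Real.rpow_mul hα.le, one_div_mul_cancel hlam.ne', Real.rpow_one] at h2


/-- **Lipschitz constant of the quantile function and two-sided variance bounds for Pareto
distributions.** If `X` is Pareto with parameters `λ > 2`, `x₀ > 0`, and `r = (λ+1)/λ`, then
`F⁻¹` is Lipschitz on `[1-2α, 1-α/2]` with constant `x₀ 2^r/(λ α^r)`, and
`x₀² α^{1-2r}/(2λ²(3-2r)) ≤ σ²_{ES_α(X)} ≤ 2 x₀² α^{1-2r}/(λ²(r-1)(3-2r))`. -/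
theorem pareto_lipschitz_and_variance
    (α lam x₀ : ℝ) (hα : α ∈ Set.Ioo (0 : ℝ) (1 / 2)) (hα' : α ≤ 1 / 2)
    (hlam : 2 < lam) (hx₀ : 0 < x₀)
    (μ : Measure ℝ) [IsProbabilityMeasure μ]
    (hPareto : ∀ t : ℝ, distCdf μ t = if t < x₀ then 0 else 1 - (x₀ / t) ^ lam)
    (r : ℝ) (hr : r = (lam + 1) / lam) :
    LipschitzOnWith (Real.toNNReal (x₀ * 2 ^ r / (lam * α ^ r))) (fun u => VaR μ u)
      (Set.Icc (1 - 2 * α) (1 - α / 2)) ∧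
    ENNReal.ofReal (x₀ ^ 2 * α ^ (1 - 2 * r) / (2 * lam ^ 2 * (3 - 2 * r))) ≤ sigmaSq α μ ∧
    sigmaSq α μ ≤
      ENNReal.ofReal (2 * x₀ ^ 2 * α ^ (1 - 2 * r) / (lam ^ 2 * (r - 1) * (3 - 2 * r))) := by
  obtain ⟨hα0, hα2⟩ := hα
  have hlam0 : (0:ℝ) < lam := by linarith
  have hl1 : (0:ℝ) < lam - 1 := by linarith
  have hl2 : (0:ℝ) < lam - 2 := by linarith
  refine ⟨lip_part hα0 hα2 hlam hx₀ μ hPareto r hr, ?_⟩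
  set q := x₀ * α ^ (-(1/lam)) with hqdef
  have hqpos : 0 < q := by positivity
  have hxq : x₀ ≤ q := by
    have h1 : (1:ℝ) ≤ α ^ (-(1/lam)) :=
      Real.one_le_rpow_of_pos_of_le_one_of_nonpos hα0 (by linarith)
        (neg_nonpos.mpr (by positivity))
    nlinarith
  have hVaR : VaR μ (1 - α) = q := by
    rw [var_formula hlam0 hx₀ μ hPareto (by linarith) (by linarith), sub_sub_cancel]
  set K := ∫⁻ t in Set.Ioi q, ∫⁻ s in Set.Ioi q,
      ENNReal.ofReal (min ((x₀/t)^lam) ((x₀/s)^lam)) with hK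
  set J := ∫⁻ t in Set.Ioi q, ∫⁻ s in Set.Ioi q,
      ENNReal.ofReal (distCdf μ (min t s) - distCdf μ t * distCdf μ s) with hJ
  have habs : ∀ t ∈ Set.Ioi q, (0:ℝ) ≤ (x₀/t)^lam ∧ (x₀/t)^lam ≤ 1/2 := by
    intro t ht
    have ht0 : 0 < t := hqpos.trans ht
    exact ⟨by positivity, (A_le hlam0 hx₀ hα0 (by linarith) ht).trans (by linarith)⟩
  have hJK : J ≤ K := by
    refine setLIntegral_mono' measurableSet_Ioi fun t ht => ?_
    refine setLIntegral_mono' measurableSet_Ioi fun s hs => ?_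
    rw [cdf_min_identity hlam0.le hx₀ hxq μ hPareto ht hs]
    exact ENNReal.ofReal_le_ofReal
      (min_prod_bounds (habs t ht).1 (habs t ht).2 (habs s hs).1 (habs s hs).2).2
  have hKJ : K ≤ 2 * J := by
    have step1 : K ≤ ∫⁻ t in Set.Ioi q, ∫⁻ s in Set.Ioi q,
        2 * ENNReal.ofReal (distCdf μ (min t s) - distCdf μ t * distCdf μ s) := by
      refine setLIntegral_mono' measurableSet_Ioi fun t ht => ?_
      refine setLIntegral_mono' measurableSet_Ioi fun s hs => ?_
      rw [cdf_min_identity hlam0.le hx₀ hxq μ hPareto ht hs,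
        show (2:ℝ≥0∞) = ENNReal.ofReal (2:ℝ) from (ENNReal.ofReal_ofNat 2).symm,
        ← ENNReal.ofReal_mul (by norm_num)]
      exact ENNReal.ofReal_le_ofReal
        (min_prod_bounds (habs t ht).1 (habs t ht).2 (habs s hs).1 (habs s hs).2).1
    refine step1.trans (le_of_eq ?_)
    rw [hJ, ← lintegral_const_mul' 2 _ ENNReal.ofNat_ne_top]
    exact setLIntegral_congr_fun measurableSet_Ioi (fun t ht =>
      lintegral_const_mul' 2 _ ENNReal.ofNat_ne_top)
  have hJge : 2⁻¹ * K ≤ J := by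
    have h := mul_le_mul_right hKJ (2⁻¹ : ℝ≥0∞)
    rwa [← mul_assoc, ENNReal.inv_mul_cancel two_ne_zero ENNReal.ofNat_ne_top, one_mul] at h
  have hKeq : K = ENNReal.ofReal (2 * x₀^lam * q^(2-lam) / ((lam-1)*(lam-2))) :=
    K_eq hlam hx₀ hqpos
  have hsig : sigmaSq α μ = ENNReal.ofReal (1/α^2) * J := by
    rw [hJ]; simp only [sigmaSq, hVaR]
  -- real arithmetic
  have e1 : q^(2-lam) = x₀^(2-lam) * α^(-(1/lam)*(2-lam)) := by
    rw [hqdef, Real.mul_rpow hx₀.le (Real.rpow_nonneg hα0.le _), ← Real.rpow_mul hα0.le]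
  have e2 : x₀^lam * x₀^(2-lam) = x₀^2 := by
    rw [← Real.rpow_add hx₀, show lam + (2-lam) = ((2:ℕ):ℝ) by push_cast; ring,
      Real.rpow_natCast]
  have e3 : α^(-(1/lam)*(2-lam)) = α^(1-2*r) * α^2 := by
    rw [← Real.rpow_natCast α 2, ← Real.rpow_add hα0]
    congr 1
    rw [hr]; field_simp; ring
  have hval : (1/α^2) * (2 * x₀^lam * q^(2-lam) / ((lam-1)*(lam-2)))
      = 2 * x₀^2 * α^(1-2*r) / ((lam-1)*(lam-2)) := by
    rw [e1, e3]
    field_simp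
    linear_combination e2
  have hαr : (0:ℝ) < α^(1-2*r) := Real.rpow_pos_of_pos hα0 _
  constructor
  · -- lower bound
    have hden2 : 2*lam^2*(3-2*r) = 2*lam*(lam-2) := by rw [hr]; field_simp; ring
    have hreal : x₀^2 * α^(1-2*r) / (2*lam^2*(3-2*r))
        ≤ 2⁻¹ * ((1/α^2) * (2 * x₀^lam * q^(2-lam) / ((lam-1)*(lam-2)))) := by
      rw [hval, hden2, show 2⁻¹ * (2 * x₀^2 * α^(1-2*r) / ((lam-1)*(lam-2)))
        = x₀^2 * α^(1-2*r) / ((lam-1)*(lam-2)) by ring]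
      refine div_le_div_of_nonneg_left (by positivity) (by nlinarith) (by nlinarith)
    calc ENNReal.ofReal (x₀ ^ 2 * α ^ (1 - 2 * r) / (2 * lam ^ 2 * (3 - 2 * r)))
        ≤ ENNReal.ofReal (2⁻¹ * ((1/α^2) * (2 * x₀^lam * q^(2-lam) / ((lam-1)*(lam-2))))) :=
          ENNReal.ofReal_le_ofReal hreal
      _ = ENNReal.ofReal (1/α^2) * (2⁻¹ *
            ENNReal.ofReal (2 * x₀^lam * q^(2-lam) / ((lam-1)*(lam-2)))) := by
          rw [ENNReal.ofReal_mul (by norm_num), ENNReal.ofReal_mul (by positivity),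
            ENNReal.ofReal_inv_of_pos two_pos, ENNReal.ofReal_ofNat]
          ring
      _ ≤ ENNReal.ofReal (1/α^2) * J := by
          refine mul_le_mul_right ?_ _
          rw [← hKeq]; exact hJge
      _ = sigmaSq α μ := hsig.symm
  · -- upper bound
    have hden1 : lam^2*(r-1)*(3-2*r) = lam - 2 := by rw [hr]; field_simp; ring
    have hreal : (1/α^2) * (2 * x₀^lam * q^(2-lam) / ((lam-1)*(lam-2)))
        ≤ 2 * x₀ ^ 2 * α ^ (1 - 2 * r) / (lam ^ 2 * (r - 1) * (3 - 2 * r)) := by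
      rw [hval, hden1]
      refine div_le_div_of_nonneg_left (by positivity) (by nlinarith) (by nlinarith)
    calc sigmaSq α μ = ENNReal.ofReal (1/α^2) * J := hsig
      _ ≤ ENNReal.ofReal (1/α^2) *
            ENNReal.ofReal (2 * x₀^lam * q^(2-lam) / ((lam-1)*(lam-2))) :=
          mul_le_mul_right (hKeq ▸ hJK) _
      _ = ENNReal.ofReal ((1/α^2) * (2 * x₀^lam * q^(2-lam) / ((lam-1)*(lam-2)))) :=
          (ENNReal.ofReal_mul (by positivity)).symm
      _ ≤ _ := ENNReal.ofReal_le_ofReal hreal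
end
end
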